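/- Let d ≥ 1 and let k, l ∈ ℝ^d with k ≠ 0, k + l ≠ 0 and k − l ≠ 0. Then 1/|k+l|² + 1/|k−l|² − 2/|k|² ≤ 8⟨k,l⟩² / (|k|²·|k+l|²·|k−l|²). -/
import Mathlib


noncomputable section

/-- Euclidean inner product on `ℝ^d`. -/
def ipV {d : ℕ} (v w : Fin d → ℝ) : ℝ := ∑ i, v i * w i

/-- Squared Euclidean norm on `ℝ^d`. -/
def nsqV {d : ℕ} (v : Fin d → ℝ) : ℝ := ∑ i, (v i) ^ 2

lemma nsqV_nonneg {d : ℕ} (v : Fin d → ℝ) : 0 ≤ nsqV v :=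
  Finset.sum_nonneg fun i _ => sq_nonneg _

lemma nsqV_pos {d : ℕ} {v : Fin d → ℝ} (hv : v ≠ 0) : 0 < nsqV v := by
  rcases (nsqV_nonneg v).lt_or_eq with h | h
  · exact h
  · exfalso
    apply hv
    funext i
    have := (Finset.sum_eq_zero_iff_of_nonneg (fun i _ => sq_nonneg (v i))).mp h.symm i
      (Finset.mem_univ i)
    simpa [pow_eq_zero_iff] using this

lemma nsqV_add {d : ℕ} (v w : Fin d → ℝ) :
    nsqV (v + w) = nsqV v + 2 * ipV v w + nsqV w := by
  simp only [nsqV, ipV, Pi.add_apply, Finset.mul_sum, ← Finset.sum_add_distrib]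
  exact Finset.sum_congr rfl fun i _ => by ring

lemma nsqV_sub {d : ℕ} (v w : Fin d → ℝ) :
    nsqV (v - w) = nsqV v - 2 * ipV v w + nsqV w := by
  simp only [nsqV, ipV, Pi.sub_apply]
  rw [Finset.mul_sum, ← Finset.sum_sub_distrib, ← Finset.sum_add_distrib]
  exact Finset.sum_congr rfl fun i _ => by ring

/-- For `k, l ∈ ℝ^d` with `k ≠ 0`, `k + l ≠ 0`, `k - l ≠ 0`:
`1/|k+l|² + 1/|k-l|² - 2/|k|² ≤ 8⟨k,l⟩² / (|k|²|k+l|²|k-l|²)`. -/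
theorem stmt16 (d : ℕ) (hd : 1 ≤ d) (k l : Fin d → ℝ)
    (hk : k ≠ 0) (hkl : k + l ≠ 0) (hkl' : k - l ≠ 0) :
    1 / nsqV (k + l) + 1 / nsqV (k - l) - 2 / nsqV k ≤
      8 * ipV k l ^ 2 / (nsqV k * nsqV (k + l) * nsqV (k - l)) := by
  have hA : 0 < nsqV k := nsqV_pos hk
  have hB : 0 < nsqV (k + l) := nsqV_pos hkl
  have hC : 0 < nsqV (k - l) := nsqV_pos hkl'
  have hL : 0 ≤ nsqV l := nsqV_nonneg l
  have h1 := nsqV_add k l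
  have h2 := nsqV_sub k l
  set A := nsqV k
  set B := nsqV (k + l)
  set C := nsqV (k - l)
  set t := ipV k l
  set L := nsqV l
  rw [div_add_div _ _ (ne_of_gt hB) (ne_of_gt hC), div_sub_div _ _ (by positivity) (ne_of_gt hA),
    div_le_div_iff₀ (by positivity) (by positivity)]
  have key : (C + B) * A - 2 * (B * C) = 8 * t ^ 2 - 2 * L * (A + L) := by
    rw [h1, h2]; ring
  have hABC : 0 < A * B * C := by positivity
  have h0 : 0 ≤ 2 * L * (A + L) := by nlinarith
  nlinarith [mul_nonneg h0 hABC.le, mul_pos hABC hABC]
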